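/- Let D be a digraph obtained from a tournament by deleting the edges of three disjoint stars whose centers form a directed triangle. If every missing edge has positive in-degree and positive out-degree in the dependency digraph Δ of D, then D has a vertex with the second neighborhood property. -/

import Mathlib

variable {V : Type*}

/-- Out-neighborhood of `v`. -/
def Nplus (A : V → V → Prop) (v : V) : Set V := {u | A v u}

/-- In-neighborhood of `v`. -/
def Nminus (A : V → V → Prop) (v : V) : Set V := {u | A u v}

/-- Second out-neighborhood: vertices at directed distance exactly 2 from `v`. -/
def Npp (A : V → V → Prop) (v : V) : Set V :=
  {u | u ≠ v ∧ ¬ A v u ∧ ∃ w, A v w ∧ A w u}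

/-- The second neighborhood property. -/
def SNP (A : V → V → Prop) (v : V) : Prop := (Nplus A v).ncard ≤ (Npp A v).ncard

/-- A digraph (given by its arc relation) has no digons: no 2-cycles (this also rules out loops when stated for `u = v`). -/
def NoDigons (A : V → V → Prop) : Prop := ∀ u v, ¬ (A u v ∧ A v u)

/-- A tournament: an orientation of a complete graph. -/
def IsTournament (A : V → V → Prop) : Prop :=
  (∀ v, ¬ A v v) ∧ ∀ u v : V, u ≠ v → (A u v ↔ ¬ A v u)

/-- `u v` is a missing edge: distinct and non-adjacent. -/
def MissingEdge (A : V → V → Prop) (u v : V) : Prop := u ≠ v ∧ ¬ A u v ∧ ¬ A v u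

/-- `x₁y₁` loses to `x₂y₂` (with this labelling of endpoints). -/
def LosesAt (A : V → V → Prop) (x₁ y₁ x₂ y₂ : V) : Prop :=
  A x₁ x₂ ∧ ¬ A x₁ y₂ ∧ y₂ ∉ Npp A x₁ ∧ A y₁ y₂ ∧ ¬ A y₁ x₂ ∧ x₂ ∉ Npp A y₁

/-- The losing relation between (unordered) missing edges: the arcs of the dependency digraph. -/
def EdgeLoses (A : V → V → Prop) (e e' : Sym2 V) : Prop :=
  ∃ x₁ y₁ x₂ y₂, e = s(x₁, y₁) ∧ e' = s(x₂, y₂) ∧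
    MissingEdge A x₁ y₁ ∧ MissingEdge A x₂ y₂ ∧ LosesAt A x₁ y₁ x₂ y₂
namespace SNPstruct

def Cfg (A : V → V → Prop) (x y z : V) : Prop :=
  A x y ∧ A y z ∧ A z x ∧
  (∀ u v, MissingEdge A u v → u = x ∨ v = x ∨ u = y ∨ v = y ∨ u = z ∨ v = z) ∧
  (∀ v, ¬ (MissingEdge A v x ∧ MissingEdge A v y)) ∧
  (∀ v, ¬ (MissingEdge A v y ∧ MissingEdge A v z)) ∧
  (∀ v, ¬ (MissingEdge A v x ∧ MissingEdge A v z)) ∧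
  (∀ u v, MissingEdge A u v → ∃ e : Sym2 V, EdgeLoses A e s(u, v)) ∧
  (∀ u v, MissingEdge A u v → ∃ e : Sym2 V, EdgeLoses A s(u, v) e)

variable {A : V → V → Prop} {x y z : V}

lemma missing_symm {u v : V} (h : MissingEdge A u v) : MissingEdge A v u :=
  ⟨h.1.symm, h.2.2, h.2.1⟩

lemma Cfg.rot (h : Cfg A x y z) : Cfg A y z x := by
  obtain ⟨h1, h2, h3, h4, h5, h6, h7, h8, h9⟩ := h
  refine ⟨h2, h3, h1, ?_, h6, ?_, ?_, h8, h9⟩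
  · intro u v hm; have := h4 u v hm; tauto
  · intro v hv; exact h7 v ⟨hv.2, hv.1⟩
  · intro v hv; exact h5 v ⟨hv.2, hv.1⟩

lemma notSelf (hD : NoDigons A) (v : V) : ¬ A v v := fun h => hD v v ⟨h, h⟩

lemma nAyx (hD : NoDigons A) (hC : Cfg A x y z) : ¬ A y x := fun h => hD x y ⟨hC.1, h⟩
lemma nAzy (hD : NoDigons A) (hC : Cfg A x y z) : ¬ A z y := fun h => hD y z ⟨hC.2.1, h⟩
lemma nAxz (hD : NoDigons A) (hC : Cfg A x y z) : ¬ A x z := fun h => hD z x ⟨hC.2.2.1, h⟩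

lemma ne_xy (hD : NoDigons A) (hC : Cfg A x y z) : x ≠ y := fun h => notSelf hD x (h ▸ hC.1)
lemma ne_yz (hD : NoDigons A) (hC : Cfg A x y z) : y ≠ z := fun h => notSelf hD y (h ▸ hC.2.1)
lemma ne_zx (hD : NoDigons A) (hC : Cfg A x y z) : z ≠ x := fun h => notSelf hD z (h ▸ hC.2.2.1)

lemma z_in_Npp_x (hD : NoDigons A) (hC : Cfg A x y z) : z ∈ Npp A x :=
  ⟨ne_zx hD hC, nAxz hD hC, y, hC.1, hC.2.1⟩

lemma y_in_Npp_z (hD : NoDigons A) (hC : Cfg A x y z) : y ∈ Npp A z :=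
  ⟨ne_yz hD hC, nAzy hD hC, x, hC.2.2.1, hC.1⟩

lemma classify (hC : Cfg A x y z) {u v : V} (hm : MissingEdge A u v) :
    (u = x ∧ MissingEdge A x v) ∨ (v = x ∧ MissingEdge A x u) ∨
    (u = y ∧ MissingEdge A y v) ∨ (v = y ∧ MissingEdge A y u) ∨
    (u = z ∧ MissingEdge A z v) ∨ (v = z ∧ MissingEdge A z u) := by
  rcases hC.2.2.2.1 u v hm with h | h | h | h | h | h
  · exact Or.inl ⟨h, h ▸ hm⟩
  · exact Or.inr (Or.inl ⟨h, h ▸ missing_symm hm⟩)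
  · exact Or.inr (Or.inr (Or.inl ⟨h, h ▸ hm⟩))
  · exact Or.inr (Or.inr (Or.inr (Or.inl ⟨h, h ▸ missing_symm hm⟩)))
  · exact Or.inr (Or.inr (Or.inr (Or.inr (Or.inl ⟨h, h ▸ hm⟩))))
  · exact Or.inr (Or.inr (Or.inr (Or.inr (Or.inr ⟨h, h ▸ missing_symm hm⟩))))

lemma outFacts (hD : NoDigons A) (hC : Cfg A x y z) {a : V} (ha : MissingEdge A x a) :
    ¬ A a y ∧ y ∉ Npp A a := by
  obtain ⟨e, x₁, y₁, x₂, y₂, he1, he2, hm1, hm2, h1, h2, h3, h4, h5, h6⟩ :=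
    hC.2.2.2.2.2.2.2.2 x a ha
  have hlab : (x = x₁ ∧ a = y₁) ∨ (x = y₁ ∧ a = x₁) := Sym2.eq_iff.1 he1
  have hcl := classify hC hm2
  have hAxy := hC.1
  rcases hlab with ⟨rfl, rfl⟩ | ⟨rfl, rfl⟩
  · rcases hcl with ⟨rfl, hm⟩ | ⟨rfl, hm⟩ | ⟨rfl, hm⟩ | ⟨rfl, hm⟩ | ⟨rfl, hm⟩ | ⟨rfl, hm⟩
    · exact absurd h1 (notSelf hD _)
    · exact absurd h1 hm.2.1
    · exact ⟨h5, h6⟩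
    · exact absurd hAxy h2
    · exact absurd h1 (nAxz hD hC)
    · exact absurd (z_in_Npp_x hD hC) h3
  · rcases hcl with ⟨rfl, hm⟩ | ⟨rfl, hm⟩ | ⟨rfl, hm⟩ | ⟨rfl, hm⟩ | ⟨rfl, hm⟩ | ⟨rfl, hm⟩
    · exact absurd h1 ha.2.2
    · exact absurd h4 (notSelf hD _)
    · exact absurd hAxy h5
    · exact ⟨h2, h3⟩
    · exact absurd (z_in_Npp_x hD hC) h6
    · exact absurd h4 (nAxz hD hC)

lemma inFacts (hD : NoDigons A) (hC : Cfg A x y z) {b : V} (hb : MissingEdge A y b) :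
    ¬ A x b ∧ b ∉ Npp A x := by
  obtain ⟨e, x₁, y₁, x₂, y₂, he1, he2, hm1, hm2, h1, h2, h3, h4, h5, h6⟩ :=
    hC.2.2.2.2.2.2.2.1 y b hb
  have hlab : (y = x₂ ∧ b = y₂) ∨ (y = y₂ ∧ b = x₂) := Sym2.eq_iff.1 he2
  have hcl := classify hC hm1
  have hAxy := hC.1
  rcases hlab with ⟨rfl, rfl⟩ | ⟨rfl, rfl⟩
  · rcases hcl with ⟨rfl, hm⟩ | ⟨rfl, hm⟩ | ⟨rfl, hm⟩ | ⟨rfl, hm⟩ | ⟨rfl, hm⟩ | ⟨rfl, hm⟩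
    · exact ⟨h2, h3⟩
    · exact absurd hAxy h5
    · exact absurd h1 (notSelf hD _)
    · exact absurd h4 hb.2.1
    · exact absurd h1 (nAzy hD hC)
    · exact absurd (y_in_Npp_z hD hC) h6
  · rcases hcl with ⟨rfl, hm⟩ | ⟨rfl, hm⟩ | ⟨rfl, hm⟩ | ⟨rfl, hm⟩ | ⟨rfl, hm⟩ | ⟨rfl, hm⟩
    · exact absurd hAxy h2
    · exact ⟨h5, h6⟩
    · exact absurd h1 hb.2.1
    · exact absurd h4 (notSelf hD _)
    · exact absurd (y_in_Npp_z hD hC) h3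
    · exact absurd h4 (nAzy hD hC)

lemma leaf_ne (hC : Cfg A x y z) {a : V} (ha : MissingEdge A x a) :
    a ≠ x ∧ a ≠ y ∧ a ≠ z := by
  refine ⟨ha.1.symm, ?_, ?_⟩
  · rintro rfl; exact ha.2.1 hC.1
  · rintro rfl; exact ha.2.2 hC.2.2.1

lemma leaf_partner (hC : Cfg A x y z) {a v : V} (ha : MissingEdge A x a)
    (hm : MissingEdge A a v) : v = x := by
  obtain ⟨hax, hay, haz⟩ := leaf_ne hC ha
  rcases classify hC hm with ⟨h, _⟩ | ⟨h, hm'⟩ | ⟨h, _⟩ | ⟨h, hm'⟩ | ⟨h, _⟩ | ⟨h, hm'⟩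
  · exact absurd h hax
  · exact h
  · exact absurd h hay
  · exact (hC.2.2.2.2.1 a ⟨missing_symm ha, missing_symm hm'⟩).elim
  · exact absurd h haz
  · exact (hC.2.2.2.2.2.2.1 a ⟨missing_symm ha, missing_symm hm'⟩).elim

lemma leaf_arcs (hD : NoDigons A) (hC : Cfg A x y z) {a : V} (ha : MissingEdge A x a) :
    A y a ∧ A a z := by
  obtain ⟨hax, hay, haz⟩ := leaf_ne hC ha
  obtain ⟨hay1, hay2⟩ := outFacts hD hC ha
  obtain ⟨haz1, haz2⟩ := inFacts hD (hC.rot.rot) ha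
  constructor
  · by_contra hya
    exact hC.2.2.2.2.1 a ⟨missing_symm ha, ⟨hay, hay1, hya⟩⟩
  · by_contra haz'
    exact hC.2.2.2.2.2.2.1 a ⟨missing_symm ha, ⟨haz, haz', haz1⟩⟩

lemma incl_i (hD : NoDigons A) (hC : Cfg A x y z) {a : V} (ha : MissingEdge A x a) :
    ∀ v, A z v → v = x ∨ A a v := by
  intro v hzv
  obtain ⟨haz1, haz2⟩ := inFacts hD (hC.rot.rot) ha
  by_contra hcon
  push_neg at hcon
  obtain ⟨hvx, hav⟩ := hcon
  have hva : ¬ A v a := by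
    intro hva
    obtain ⟨hax, hay, haz⟩ := leaf_ne hC ha
    exact haz2 ⟨haz, haz1, v, hzv, hva⟩
  have hvnea : v ≠ a := fun h => (h ▸ haz1) hzv
  exact hvx (leaf_partner hC ha ⟨hvnea.symm, hav, hva⟩)

lemma incl_ii (hD : NoDigons A) (hC : Cfg A x y z) {a : V} (ha : MissingEdge A x a) :
    ∀ v, A a v → A y v ∨ MissingEdge A y v := by
  intro v hav
  obtain ⟨hay1, hay2⟩ := outFacts hD hC ha
  have hvy : ¬ A v y := by
    intro hvy
    obtain ⟨hax, hay, haz⟩ := leaf_ne hC ha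
    exact hay2 ⟨hay.symm, hay1, v, hav, hvy⟩
  have hvney : v ≠ y := fun h => hay1 (h ▸ hav)
  by_cases hyv : A y v
  · exact Or.inl hyv
  · exact Or.inr ⟨hvney.symm, hyv, hvy⟩

end SNPstruct


namespace SNPaux

open Classical in
noncomputable def phi {V : Type*} (R : V → V → Prop) (w : V → ℕ) (a b : V) : ℕ :=
  if R a b then w a * w b else 0

noncomputable def cross {V : Type*} (R : V → V → Prop) (w : V → ℕ) (l₁ l₂ : List V) : ℕ :=
  (l₁.map (fun a => (l₂.map (phi R w a)).sum)).sum

noncomputable def F {V : Type*} (R : V → V → Prop) (w : V → ℕ) : List V → ℕ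
  | [] => 0
  | a :: l => (l.map (phi R w a)).sum + F R w l

open Classical in
noncomputable def wOn {V : Type*} (w : V → ℕ) (p : V → Prop) (l : List V) : ℕ :=
  (l.map (fun v => if p v then w v else 0)).sum

variable {V : Type*} {R : V → V → Prop} {w : V → ℕ}

lemma cross_nil_left (l : List V) : cross R w [] l = 0 := by simp [cross]

lemma cross_append_left (l₁ l₂ l₃ : List V) :
    cross R w (l₁ ++ l₂) l₃ = cross R w l₁ l₃ + cross R w l₂ l₃ := by
  simp [cross]

lemma cross_cons_left (a : V) (l₁ l₂ : List V) :
    cross R w (a :: l₁) l₂ = (l₂.map (phi R w a)).sum + cross R w l₁ l₂ := by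
  simp [cross]

lemma cross_append_right (l₁ l₂ l₃ : List V) :
    cross R w l₁ (l₂ ++ l₃) = cross R w l₁ l₂ + cross R w l₁ l₃ := by
  induction l₁ with
  | nil => simp [cross]
  | cons a l ih =>
    simp only [cross_cons_left, ih, List.map_append, List.sum_append]
    omega

lemma cross_singleton_left (u : V) (l : List V) :
    cross R w [u] l = (l.map (phi R w u)).sum := by simp [cross]

lemma cross_singleton_right (u : V) (l : List V) :
    cross R w l [u] = (l.map (fun v => phi R w v u)).sum := by simp [cross]

lemma F_append (l₁ l₂ : List V) :
    F R w (l₁ ++ l₂) = F R w l₁ + F R w l₂ + cross R w l₁ l₂ := by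
  induction l₁ with
  | nil => simp [F, cross_nil_left]
  | cons a l ih =>
    simp only [List.cons_append, F, List.append_eq, List.map_append, List.sum_append, ih, cross_cons_left]
    omega

lemma F_move (p h r : List V) (u : V) :
    F R w (p ++ (h ++ (u :: r))) + cross R w [u] h
      = F R w (p ++ (u :: (h ++ r))) + cross R w h [u] := by
  have e1 : u :: r = [u] ++ r := rfl
  have e2 : u :: (h ++ r) = [u] ++ (h ++ r) := rfl
  rw [e1, e2]
  simp only [F_append, cross_append_left, cross_append_right]
  omega

end SNPaux

namespace SNPaux2
open SNPaux

variable {V : Type*}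

lemma sum_map_le {l : List V} {f g : V → ℕ} (h : ∀ v ∈ l, f v ≤ g v) :
    (l.map f).sum ≤ (l.map g).sum := by
  induction l with
  | nil => simp
  | cons a l ih =>
    simp only [List.map_cons, List.sum_cons]
    exact Nat.add_le_add (h a (by simp)) (ih (fun v hv => h v (by simp [hv])))

lemma sum_map_congr {l : List V} {f g : V → ℕ} (h : ∀ v ∈ l, f v = g v) :
    (l.map f).sum = (l.map g).sum :=
  le_antisymm (sum_map_le (fun v hv => (h v hv).le)) (sum_map_le (fun v hv => (h v hv).ge))

open Classical in
lemma mul_wOn (w : V → ℕ) (p : V → Prop) (c : ℕ) (l : List V) :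
    (l.map (fun v => if p v then c * w v else 0)).sum = c * wOn w p l := by
  induction l with
  | nil => simp [wOn]
  | cons a l ih =>
    simp only [wOn, List.map_cons, List.sum_cons] at *
    rw [ih]
    by_cases h : p a <;> simp [h, Nat.mul_add]

open Classical in
lemma wOn_append (w : V → ℕ) (p : V → Prop) (l₁ l₂ : List V) :
    wOn w p (l₁ ++ l₂) = wOn w p l₁ + wOn w p l₂ := by
  simp [wOn]

open Classical in
lemma wOn_cons (w : V → ℕ) (p : V → Prop) (a : V) (l : List V) :
    wOn w p (a :: l) = (if p a then w a else 0) + wOn w p l := by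
  simp [wOn]

lemma split_first (K : V → Prop) (t : List V) :
    (∀ v ∈ t, ¬ K v) ∨ ∃ h u t', t = h ++ u :: t' ∧ (∀ v ∈ h, ¬ K v) ∧ K u := by
  induction t with
  | nil => left; simp
  | cons a t ih =>
    by_cases ha : K a
    · right; exact ⟨[], a, t, by simp, by simp, ha⟩
    · rcases ih with h | ⟨h, u, t', rfl, hh, hu⟩
      · left; intro v hv
        rcases List.mem_cons.1 hv with rfl | hv
        · exact ha
        · exact h v hv
      · right
        refine ⟨a :: h, u, t', rfl, ?_, hu⟩
        intro v hv
        rcases List.mem_cons.1 hv with rfl | hv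
        · exact ha
        · exact hh v hv

open Classical in
lemma mul_wOn_right (w : V → ℕ) (p : V → Prop) (c : ℕ) (l : List V) :
    (l.map (fun v => if p v then w v * c else 0)).sum = wOn w p l * c := by
  induction l with
  | nil => simp [wOn]
  | cons a l ih =>
    simp only [wOn, List.map_cons, List.sum_cons] at *
    rw [ih]
    by_cases h : p a <;> simp [h, Nat.add_mul]

open Classical in
theorem weightedHT (s : Finset V) (hs : s.Nonempty) (R : V → V → Prop) (w : V → ℕ)
    (hw : ∀ v ∈ s, 0 < w v)
    (irr : ∀ v ∈ s, ¬ R v v)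
    (asym : ∀ u ∈ s, ∀ v ∈ s, R u v → ¬ R v u)
    (tot : ∀ u ∈ s, ∀ v ∈ s, u ≠ v → ¬ R u v → R v u) :
    ∃ f ∈ s, ∑ v ∈ s.filter (fun v => R f v), w v ≤
      ∑ v ∈ s.filter (fun v => v ≠ f ∧ ¬ R f v ∧ ∃ t ∈ s, R f t ∧ R t v), w v := by
  classical
  set l₀ := s.toList with hl₀
  have h₀ : l₀ ∈ l₀.permutations := List.mem_permutations.2 (List.Perm.refl _)
  obtain ⟨L, hL⟩ : ∃ L, L ∈ List.argmax (F R w) l₀.permutations := by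
    cases h : List.argmax (F R w) l₀.permutations with
    | none => exact absurd (List.argmax_eq_none.1 h) (List.ne_nil_of_mem h₀)
    | some L => exact ⟨L, rfl⟩
  have hLperm : L.Perm l₀ := List.mem_permutations.1 (List.argmax_mem hL)
  have hmax : ∀ L', L'.Perm L → F R w L' ≤ F R w L := fun L' h' =>
    List.le_of_mem_argmax (List.mem_permutations.2 (h'.trans hLperm)) hL
  have hnodup : L.Nodup := (hLperm.nodup_iff).2 (Finset.nodup_toList s)
  have hmemL : ∀ v, v ∈ L ↔ v ∈ s := fun v => by
    rw [hLperm.mem_iff, hl₀, Finset.mem_toList]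
  obtain rfl | ⟨M, f, rfl⟩ := List.eq_nil_or_concat L
  · obtain ⟨v0, hv0⟩ := hs
    exact absurd ((hmemL v0).2 hv0) (by simp)
  simp only [List.concat_eq_append] at hL hLperm hmax hnodup hmemL
  have hfs : f ∈ s := (hmemL f).1 (by simp)
  set Bp : V → Prop := fun v => R f v with hBp
  set Pp : V → Prop := fun v => v ≠ f ∧ ¬ R f v ∧ ∃ t ∈ s, R f t ∧ R t v with hPp
  set Kp : V → Prop := fun v => v ∈ s ∧ v ≠ f ∧ ¬ R f v ∧ ¬ Pp v with hKp
  have hBf : ¬ Bp f := irr f hfs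
  have hPf : ¬ Pp f := fun h => h.1 rfl
  have hPK : ∀ v ∈ s, v ≠ f → ¬ R f v → ¬ Kp v → Pp v := by
    intro v hv h1 h2 h3
    by_contra hP
    exact h3 ⟨hv, h1, h2, hP⟩
  have hKu_Bv : ∀ u, Kp u → ∀ v ∈ s, Bp v → R u v := by
    intro u hu v hv hBv
    have hus : u ∈ s := hu.1
    have hvu : ¬ R v u := fun hvu => hu.2.2.2 ⟨hu.2.1, hu.2.2.1, v, hv, hBv, hvu⟩
    have huv : u ≠ v := fun h => hu.2.2.1 (h ▸ hBv)
    exact tot v hv u hus (fun h => huv h.symm) hvu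
  have moveIneq : ∀ (p h r : List V) (u : V), M ++ [f] = p ++ (h ++ (u :: r)) →
      cross R w [u] h ≤ cross R w h [u] := by
    intro p h r u hdec
    have hperm : (p ++ (u :: (h ++ r))).Perm (M ++ [f]) := by
      rw [hdec]
      exact List.Perm.append_left p List.perm_middle.symm
    have h1 := hmax _ hperm
    have h2 := F_move (R := R) (w := w) p h r u
    rw [← hdec] at h2
    omega
  have key : ∀ n (t : List V), t.length ≤ n → t <:+ (M ++ [f]) →
      wOn w Bp t ≤ wOn w Pp t := by
    intro n
    induction n with
    | zero =>
      intro t ht _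
      have : t = [] := List.length_eq_zero_iff.1 (Nat.le_zero.1 ht)
      simp [this, wOn]
    | succ n ih =>
      intro t hlen hsuf
      have htsub : t.Sublist (M ++ [f]) := hsuf.sublist
      have htnd : t.Nodup := htsub.nodup hnodup
      have htmem : ∀ v ∈ t, v ∈ s := fun v hv => (hmemL v).1 (htsub.mem hv)
      rcases split_first Kp t with hall | ⟨h, u, t', rfl, hh, hu⟩
      · -- no K in t : t ends with f
        rcases List.eq_nil_or_concat t with rfl | ⟨m, a, ht⟩
        · simp [wOn]
        rw [List.concat_eq_append] at ht
        subst ht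
        obtain ⟨p, hp⟩ := hsuf
        have haf : a = f := by
          have h1 : (p ++ m) ++ [a] = M ++ [f] := by rw [← hp]; simp
          have h2 := (List.append_inj' h1 rfl).2
          simpa using h2
        rw [haf] at hp hall htnd htmem ⊢
        have hfm : f ∉ m := by
          intro hf
          exact (List.nodup_append.1 htnd).2.2 f hf f (by simp) rfl
        have hmv := moveIneq p m [] f (by rw [← hp])
        have lhs_eq : cross R w [f] m = w f * wOn w Bp m := by
          rw [cross_singleton_left, ← mul_wOn]
          refine sum_map_congr (fun v hv => ?_)
          simp only [phi, hBp]
        have rhs_le : cross R w m [f] ≤ wOn w Pp m * w f := by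
          rw [cross_singleton_right, ← mul_wOn_right]
          refine sum_map_le (fun v hv => ?_)
          simp only [phi]
          split
          · rename_i hvf
            have hvs : v ∈ s := htmem v (by simp [hv])
            have hvnf : v ≠ f := fun h => hfm (h ▸ hv)
            have hnBv : ¬ R f v := asym v hvs f hfs hvf
            have hPv : Pp v := hPK v hvs hvnf hnBv (hall v (by simp [hv]))
            rw [if_pos hPv]
          · simp
        have hwf : 0 < w f := hw f hfs
        have hcore : wOn w Bp m ≤ wOn w Pp m := by
          have := le_trans (le_trans lhs_eq.ge hmv) rhs_le
          rw [Nat.mul_comm (wOn w Pp m) (w f)] at this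
          exact Nat.le_of_mul_le_mul_left this hwf
        have e1 : wOn w Bp (m ++ [f]) = wOn w Bp m := by
          simp [wOn_append, wOn_cons, wOn, hBf]
        have e2 : wOn w Pp (m ++ [f]) = wOn w Pp m := by
          simp [wOn_append, wOn_cons, wOn, hPf]
        rw [e1, e2]; exact hcore
      · -- t = h ++ u :: t' with u ∈ K
        have hsuf' : t' <:+ (M ++ [f]) := by
          refine List.IsSuffix.trans ?_ hsuf
          exact ⟨h ++ [u], by simp⟩
        have hlen' : t'.length ≤ n := by
          simp only [List.length_append, List.length_cons] at hlen
          omega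
        have IH := ih t' hlen' hsuf'
        obtain ⟨p, hp⟩ := hsuf
        have hmv := moveIneq p h t' u hp.symm
        have hus : u ∈ s := hu.1
        have hwu : 0 < w u := hw u hus
        have hunh : u ∉ h := by
          intro huh
          exact (List.nodup_append.1 htnd).2.2 u huh u (by simp) rfl
        have lhs_ge : w u * wOn w Bp h ≤ cross R w [u] h := by
          rw [cross_singleton_left, ← mul_wOn]
          refine sum_map_le (fun v hv => ?_)
          have hvs : v ∈ s := htmem v (by simp [hv])
          by_cases hBv : Bp v
          · have : R u v := hKu_Bv u hu v hvs hBv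
            simp [phi, this, hBv]
          · simp [hBv]
        have rhs_le : cross R w h [u] ≤ wOn w Pp h * w u := by
          rw [cross_singleton_right, ← mul_wOn_right]
          refine sum_map_le (fun v hv => ?_)
          simp only [phi]
          split
          · rename_i hvu
            have hvs : v ∈ s := htmem v (by simp [hv])
            have hvnf : v ≠ f := by
              rintro rfl
              exact hu.2.2.1 hvu
            have hnBv : ¬ Bp v := by
              intro hBv
              exact asym u hus v hvs (hKu_Bv u hu v hvs hBv) hvu
            have hPv : Pp v := hPK v hvs hvnf hnBv (hh v hv)
            rw [if_pos hPv]
          · simp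
        have hcore : wOn w Bp h ≤ wOn w Pp h := by
          have := le_trans lhs_ge (le_trans hmv rhs_le)
          rw [Nat.mul_comm (wOn w Pp h) (w u)] at this
          exact Nat.le_of_mul_le_mul_left this hwu
        have hnBu : ¬ Bp u := hu.2.2.1
        have hnPu : ¬ Pp u := hu.2.2.2
        calc wOn w Bp (h ++ u :: t') = wOn w Bp h + wOn w Bp t' := by
              simp [wOn_append, wOn_cons, hnBu]
          _ ≤ wOn w Pp h + wOn w Pp t' := Nat.add_le_add hcore IH
          _ = wOn w Pp (h ++ u :: t') := by simp [wOn_append, wOn_cons, hnPu]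
  have hfinal := key (M ++ [f]).length (M ++ [f]) le_rfl (List.suffix_refl _)
  have conv : ∀ p : V → Prop, wOn w p (M ++ [f]) = ∑ v ∈ s.filter p, w v := by
    intro p
    have h1 : wOn w p (M ++ [f]) = wOn w p l₀ := (hLperm.map _).sum_eq
    rw [h1]
    unfold wOn
    rw [hl₀, Finset.sum_map_toList, ← Finset.sum_filter]
  refine ⟨f, hfs, ?_⟩
  have h1 := conv Bp
  have h2 := conv Pp
  rw [h1, h2] at hfinal
  convert hfinal using 2
  ext v
  simp [Finset.mem_filter, hPp]

end SNPaux2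

open SNPstruct SNPaux2

/-- a digraph obtained from a tournament by deleting the edges of
three disjoint stars whose centers form a directed triangle `x → y → z → x`, in
which every missing edge has positive in-degree and positive out-degree in the
dependency digraph, has a vertex with the SNP. -/
theorem tournament_minus_three_stars_SNP [Fintype V]
    (A : V → V → Prop) (hA : NoDigons A)
    (x y z : V) (hxy : x ≠ y) (hyz : y ≠ z) (hxz : x ≠ z)
    (hXY : A x y) (hYZ : A y z) (hZX : A z x)
    -- the missing graph is the disjoint union of three stars with centers x, y, z:
    (hStar : ∀ u v, MissingEdge A u v → u = x ∨ v = x ∨ u = y ∨ v = y ∨ u = z ∨ v = z)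
    (hDisjXY : ∀ v, ¬ (MissingEdge A v x ∧ MissingEdge A v y))
    (hDisjYZ : ∀ v, ¬ (MissingEdge A v y ∧ MissingEdge A v z))
    (hDisjXZ : ∀ v, ¬ (MissingEdge A v x ∧ MissingEdge A v z))
    (hxLeaf : ∃ a, MissingEdge A x a) (hyLeaf : ∃ b, MissingEdge A y b)
    (hzLeaf : ∃ c, MissingEdge A z c)
    -- δ(Δ) > 0:
    (hIndeg : ∀ u v, MissingEdge A u v → ∃ e : Sym2 V, EdgeLoses A e s(u, v))
    (hOutdeg : ∀ u v, MissingEdge A u v → ∃ e : Sym2 V, EdgeLoses A s(u, v) e) :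
    ∃ v : V, SNP A v := by
  classical
  have hC : Cfg A x y z := ⟨hXY, hYZ, hZX, hStar, hDisjXY, hDisjYZ, hDisjXZ, hIndeg, hOutdeg⟩
  have hC2 : Cfg A y z x := hC.rot
  have hC3 : Cfg A z x y := hC2.rot
  obtain ⟨a0, ha0⟩ := hxLeaf
  obtain ⟨b0, hb0⟩ := hyLeaf
  obtain ⟨c0, hc0⟩ := hzLeaf
  set Op : V → Prop := fun v => v = x ∨ v = y ∨ v = z ∨
    MissingEdge A x v ∨ MissingEdge A y v ∨ MissingEdge A z v with hOpDef
  set Up : V → Prop := fun v => ¬ Op v with hUpDef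
  have hOx : Op x := Or.inl rfl
  have hOy : Op y := Or.inr (Or.inl rfl)
  have hOz : Op z := Or.inr (Or.inr (Or.inl rfl))
  have hOLx : ∀ v, MissingEdge A x v → Op v := fun v h => Or.inr (Or.inr (Or.inr (Or.inl h)))
  have hOLy : ∀ v, MissingEdge A y v → Op v := fun v h =>
    Or.inr (Or.inr (Or.inr (Or.inr (Or.inl h))))
  have hOLz : ∀ v, MissingEdge A z v → Op v := fun v h =>
    Or.inr (Or.inr (Or.inr (Or.inr (Or.inr h))))
  -- plain vertices are adjacent to everything
  have hadjU : ∀ u, Up u → ∀ t, t ≠ u → A u t ∨ A t u := by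
    intro u hu t ht
    by_contra hcon
    push_neg at hcon
    have hm : MissingEdge A u t := ⟨fun h => ht h.symm, hcon.1, hcon.2⟩
    rcases classify hC hm with ⟨h, _⟩ | ⟨_, hm'⟩ | ⟨h, _⟩ | ⟨_, hm'⟩ | ⟨h, _⟩ | ⟨_, hm'⟩
    · exact hu (h ▸ hOx)
    · exact hu (hOLx u hm')
    · exact hu (h ▸ hOy)
    · exact hu (hOLy u hm')
    · exact hu (h ▸ hOz)
    · exact hu (hOLz u hm')
  -- the chain of implications for plain vertices
  have hUne : ∀ u, Up u → u ≠ x ∧ u ≠ y ∧ u ≠ z := by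
    intro u hu
    refine ⟨?_, ?_, ?_⟩ <;> rintro rfl
    · exact hu hOx
    · exact hu hOy
    · exact hu hOz
  have chain_xb : ∀ u, Up u → A x u → ∀ b, MissingEdge A y b → A b u := by
    intro u hu hxu b hb
    rcases incl_i hA hC2 hb u hxu with h | h
    · exact absurd h (hUne u hu).2.1
    · exact h
  have chain_bz : ∀ u, Up u → ∀ b, MissingEdge A y b → A b u → A z u := by
    intro u hu b hb hbu
    rcases incl_ii hA hC2 hb u hbu with h | h
    · exact h
    · exact absurd (hOLz u h) hu
  have chain_za : ∀ u, Up u → A z u → ∀ a, MissingEdge A x a → A a u := by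
    intro u hu hzu a ha
    rcases incl_i hA hC ha u hzu with h | h
    · exact absurd h (hUne u hu).1
    · exact h
  have chain_ay : ∀ u, Up u → ∀ a, MissingEdge A x a → A a u → A y u := by
    intro u hu a ha hau
    rcases incl_ii hA hC ha u hau with h | h
    · exact h
    · exact absurd (hOLy u h) hu
  have chain_yc : ∀ u, Up u → A y u → ∀ c, MissingEdge A z c → A c u := by
    intro u hu hyu c hc
    rcases incl_i hA hC3 hc u hyu with h | h
    · exact absurd h (hUne u hu).2.2
    · exact h
  have chain_cx : ∀ u, Up u → ∀ c, MissingEdge A z c → A c u → A x u := by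
    intro u hu c hc hcu
    rcases incl_ii hA hC3 hc u hcu with h | h
    · exact h
    · exact absurd (hOLx u h) hu
  -- W vertices are dominated by all of O
  have hOW : ∀ u, Up u → A x u → ∀ o, Op o → A o u := by
    intro u hu hxu o ho
    have hzu : A z u := chain_bz u hu b0 hb0 (chain_xb u hu hxu b0 hb0)
    have hyu : A y u := chain_ay u hu a0 ha0 (chain_za u hu hzu a0 ha0)
    rcases ho with rfl | rfl | rfl | hm | hm | hm
    · exact hxu
    · exact hyu
    · exact hzu
    · exact chain_za u hu hzu o hm
    · exact chain_xb u hu hxu o hm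
    · exact chain_yc u hu hyu o hm
  -- R vertices dominate all of O
  have hRO : ∀ u, Up u → ¬ A x u → ∀ o, Op o → A u o ∧ ¬ A o u := by
    intro u hu hxu o ho
    have hyu : ¬ A y u := fun h => hxu (chain_cx u hu c0 hc0 (chain_yc u hu h c0 hc0))
    have hzu : ¬ A z u := fun h => hyu (chain_ay u hu a0 ha0 (chain_za u hu h a0 ha0))
    have hou : ¬ A o u := by
      rcases ho with rfl | rfl | rfl | hm | hm | hm
      · exact hxu
      · exact hyu
      · exact hzu
      · exact fun h => hyu (chain_ay u hu o hm h)
      · exact fun h => hzu (chain_bz u hu o hm h)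
      · exact fun h => hxu (chain_cx u hu o hm h)
    have hne : o ≠ u := fun h => hu (h ▸ ho)
    rcases hadjU u hu o hne with h | h
    · exact ⟨h, hou⟩
    · exact absurd h hou
  
  have vcases : ∀ v, v = x ∨ v = y ∨ v = z ∨ MissingEdge A x v ∨ MissingEdge A y v ∨
      MissingEdge A z v ∨ Up v := by
    intro v
    by_cases h : Op v
    · rcases h with h | h | h | h | h | h
      · exact Or.inl h
      · exact Or.inr (Or.inl h)
      · exact Or.inr (Or.inr (Or.inl h))
      · exact Or.inr (Or.inr (Or.inr (Or.inl h)))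
      · exact Or.inr (Or.inr (Or.inr (Or.inr (Or.inl h))))
      · exact Or.inr (Or.inr (Or.inr (Or.inr (Or.inr (Or.inl h)))))
    · exact Or.inr (Or.inr (Or.inr (Or.inr (Or.inr (Or.inr h)))))
  -- exact out-neighbourhoods of the three centers
  have hNx : ∀ v, A x v ↔ (v = y ∨ MissingEdge A z v ∨ (Up v ∧ A x v)) := by
    intro v
    constructor
    · intro hv
      rcases vcases v with h | h | h | hm | hm | hm | hu
      · rw [h] at hv; exact absurd hv (notSelf hA x)
      · exact Or.inl h
      · rw [h] at hv; exact absurd hv (nAxz hA hC)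
      · exact absurd hv hm.2.1
      · exact absurd hv (inFacts hA hC hm).1
      · exact Or.inr (Or.inl hm)
      · exact Or.inr (Or.inr ⟨hu, hv⟩)
    · rintro (rfl | hm | ⟨_, hv⟩)
      · exact hXY
      · exact (leaf_arcs hA hC3 hm).1
      · exact hv
  have hNy : ∀ v, A y v ↔ (v = z ∨ MissingEdge A x v ∨ (Up v ∧ A x v)) := by
    intro v
    constructor
    · intro hv
      rcases vcases v with h | h | h | hm | hm | hm | hu
      · rw [h] at hv; exact absurd hv (nAyx hA hC)
      · rw [h] at hv; exact absurd hv (notSelf hA y)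
      · exact Or.inl h
      · exact Or.inr (Or.inl hm)
      · exact absurd hv hm.2.1
      · exact absurd hv (inFacts hA hC2 hm).1
      · exact Or.inr (Or.inr ⟨hu, chain_cx v hu c0 hc0 (chain_yc v hu hv c0 hc0)⟩)
    · rintro (rfl | hm | ⟨hu, hv⟩)
      · exact hYZ
      · exact (leaf_arcs hA hC hm).1
      · exact hOW v hu hv y hOy
  have hNz : ∀ v, A z v ↔ (v = x ∨ MissingEdge A y v ∨ (Up v ∧ A x v)) := by
    intro v
    constructor
    · intro hv
      rcases vcases v with h | h | h | hm | hm | hm | hu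
      · exact Or.inl h
      · rw [h] at hv; exact absurd hv (nAzy hA hC)
      · rw [h] at hv; exact absurd hv (notSelf hA z)
      · exact absurd hv (inFacts hA hC3 hm).1
      · exact Or.inr (Or.inl hm)
      · exact absurd hv hm.2.1
      · have hyv : A y v := chain_ay v hu a0 ha0 (chain_za v hu hv a0 ha0)
        exact Or.inr (Or.inr ⟨hu, chain_cx v hu c0 hc0 (chain_yc v hu hyv c0 hc0)⟩)
    · rintro (rfl | hm | ⟨hu, hv⟩)
      · exact hZX
      · exact (leaf_arcs hA hC2 hm).1
      · exact hOW v hu hv z hOz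
  -- members of the second neighbourhoods of the centers
  have hPx : ∀ v, (v = z ∨ MissingEdge A x v ∨
      ((Up v ∧ ¬ A x v) ∧ ∃ u, (Up u ∧ A x u) ∧ A u v)) → v ∈ Npp A x := by
    rintro v (rfl | hm | ⟨⟨hu, hxv⟩, u, ⟨hu', hxu⟩, huv⟩)
    · exact z_in_Npp_x hA hC
    · exact ⟨(leaf_ne hC hm).1, hm.2.1, y, hXY, (leaf_arcs hA hC hm).1⟩
    · exact ⟨(hUne v hu).1, hxv, u, hxu, huv⟩
  have hPy : ∀ v, (v = x ∨ MissingEdge A y v ∨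
      ((Up v ∧ ¬ A x v) ∧ ∃ u, (Up u ∧ A x u) ∧ A u v)) → v ∈ Npp A y := by
    rintro v (rfl | hm | ⟨⟨hu, hxv⟩, u, ⟨hu', hxu⟩, huv⟩)
    · exact ⟨hxy, nAyx hA hC, z, hYZ, hZX⟩
    · exact ⟨(leaf_ne hC2 hm).1, hm.2.1, z, hYZ, (leaf_arcs hA hC2 hm).1⟩
    · exact ⟨(hUne v hu).2.1, (hRO v hu hxv y hOy).2, u, hOW u hu' hxu y hOy, huv⟩
  have hPz : ∀ v, (v = y ∨ MissingEdge A z v ∨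
      ((Up v ∧ ¬ A x v) ∧ ∃ u, (Up u ∧ A x u) ∧ A u v)) → v ∈ Npp A z := by
    rintro v (rfl | hm | ⟨⟨hu, hxv⟩, u, ⟨hu', hxu⟩, huv⟩)
    · exact ⟨hyz, nAzy hA hC, x, hZX, hXY⟩
    · exact ⟨(leaf_ne hC3 hm).1, hm.2.1, x, hZX, (leaf_arcs hA hC3 hm).1⟩
    · exact ⟨(hUne v hu).2.2, (hRO v hu hxv z hOz).2, u, hOW u hu' hxu z hOz, huv⟩
  
  -- Finset setup
  set OF : Finset V := Finset.univ.filter Op with hOF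
  set sF : Finset V := Finset.univ.filter (fun v => v = x ∨ Up v) with hsF
  set WF : Finset V := Finset.univ.filter (fun v => Up v ∧ A x v) with hWF
  set LxF : Finset V := Finset.univ.filter (fun v => MissingEdge A x v) with hLxF
  set LyF : Finset V := Finset.univ.filter (fun v => MissingEdge A y v) with hLyF
  set LzF : Finset V := Finset.univ.filter (fun v => MissingEdge A z v) with hLzF
  set RρF : Finset V := Finset.univ.filter
    (fun v => (Up v ∧ ¬ A x v) ∧ ∃ u, (Up u ∧ A x u) ∧ A u v) with hRρF
  set Ocard : ℕ := OF.card with hOcard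
  set w : V → ℕ := fun v => if v = x then Ocard else 1 with hwDef
  have hxOF : x ∈ OF := by simp [hOF, hOx]
  have hOcard_pos : 0 < Ocard := Finset.card_pos.2 ⟨x, hxOF⟩
  have hxs : x ∈ sF := by simp [hsF]
  have hUs : ∀ v, Up v → v ∈ sF := by
    intro v hv
    simp only [hsF, Finset.mem_filter, Finset.mem_univ, true_and]
    exact Or.inr hv
  have hsmem : ∀ v ∈ sF, v = x ∨ Up v := by intro v hv; simpa [hsF] using hv
  have ncardSet : ∀ p : V → Prop, {u | p u}.ncard = (Finset.univ.filter p).card := by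
    intro p
    rw [Set.ncard_eq_toFinset_card', Set.toFinset_setOf]
  have sumW_card : ∀ T : Finset V, x ∉ T → ∑ v ∈ T, w v = T.card := by
    intro T hx
    rw [Finset.card_eq_sum_ones]
    refine Finset.sum_congr rfl (fun v hv => if_neg (fun (h : v = x) => hx ?_))
    rw [← h]; exact hv
  -- apply weighted Havet–Thomassé
  obtain ⟨f, hfs, hineq⟩ := weightedHT sF ⟨x, hxs⟩ A w
    (by
      intro v hv
      rw [hwDef]
      dsimp only
      split
      · exact hOcard_pos
      · exact Nat.one_pos)
    (fun v _ => notSelf hA v)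
    (fun u _ v _ h h' => hA u v ⟨h, h'⟩)
    (by
      intro u hu v hv huv hnuv
      rcases hsmem u hu with hux | hUu
      · rcases hsmem v hv with hvx | hUv
        · exact absurd (hux.trans hvx.symm) huv
        · rcases hadjU v hUv u huv with h | h
          · exact h
          · exact absurd h hnuv
      · rcases hadjU u hUu v (fun h => huv h.symm) with h | h
        · exact absurd h hnuv
        · exact h)
  rcases hsmem f hfs with hfx | hUf
  · -- Case 1 : the feed is x
    rw [hfx] at hineq
    have e1 : sF.filter (fun v => A x v) = WF := by
      ext v
      simp only [hsF, hWF, Finset.mem_filter, Finset.mem_univ, true_and]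
      constructor
      · rintro ⟨h1 | h1, h2⟩
        · rw [h1] at h2; exact absurd h2 (notSelf hA x)
        · exact ⟨h1, h2⟩
      · rintro ⟨h1, h2⟩
        exact ⟨Or.inr h1, h2⟩
    have e2 : sF.filter (fun v => v ≠ x ∧ ¬ A x v ∧ ∃ t ∈ sF, A x t ∧ A t v) = RρF := by
      ext v
      simp only [hsF, hRρF, Finset.mem_filter, Finset.mem_univ, true_and]
      constructor
      · rintro ⟨h0, hvx, hxv, t, htS, hxt, htv⟩
        rcases h0 with h0 | h0
        · exact absurd h0 hvx
        rcases htS with h0' | hUt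
        · rw [h0'] at hxt; exact absurd hxt (notSelf hA x)
        · exact ⟨⟨h0, hxv⟩, t, ⟨hUt, hxt⟩, htv⟩
      · rintro ⟨⟨hu, hxv⟩, u, ⟨hu', hxu⟩, huv⟩
        exact ⟨Or.inr hu, (hUne v hu).1, hxv, u, Or.inr hu', hxu, huv⟩
    have hxWF : x ∉ WF := by
      simp only [hWF, Finset.mem_filter]
      rintro ⟨_, hu, _⟩
      exact hu hOx
    have hxRρ : x ∉ RρF := by
      simp only [hRρF, Finset.mem_filter]
      rintro ⟨_, ⟨hu, _⟩, _⟩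
      exact hu hOx
    rw [e1, e2, sumW_card WF hxWF, sumW_card RρF hxRρ] at hineq
    -- hineq : WF.card ≤ RρF.card
    have hdLzW : Disjoint LzF WF := by
      rw [Finset.disjoint_left]
      intro v hv hv2
      rw [hLzF, Finset.mem_filter] at hv
      rw [hWF, Finset.mem_filter] at hv2
      exact hv2.2.1 (hOLz v hv.2)
    have hdLxW : Disjoint LxF WF := by
      rw [Finset.disjoint_left]
      intro v hv hv2
      rw [hLxF, Finset.mem_filter] at hv
      rw [hWF, Finset.mem_filter] at hv2
      exact hv2.2.1 (hOLx v hv.2)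
    have hdLyW : Disjoint LyF WF := by
      rw [Finset.disjoint_left]
      intro v hv hv2
      rw [hLyF, Finset.mem_filter] at hv
      rw [hWF, Finset.mem_filter] at hv2
      exact hv2.2.1 (hOLy v hv.2)
    have hdLxR : Disjoint LxF RρF := by
      rw [Finset.disjoint_left]
      intro v hv hv2
      rw [hLxF, Finset.mem_filter] at hv
      rw [hRρF, Finset.mem_filter] at hv2
      exact hv2.2.1.1 (hOLx v hv.2)
    have hdLyR : Disjoint LyF RρF := by
      rw [Finset.disjoint_left]
      intro v hv hv2
      rw [hLyF, Finset.mem_filter] at hv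
      rw [hRρF, Finset.mem_filter] at hv2
      exact hv2.2.1.1 (hOLy v hv.2)
    have hdLzR : Disjoint LzF RρF := by
      rw [Finset.disjoint_left]
      intro v hv hv2
      rw [hLzF, Finset.mem_filter] at hv
      rw [hRρF, Finset.mem_filter] at hv2
      exact hv2.2.1.1 (hOLz v hv.2)
    have hyLz : y ∉ LzF := by
      rw [hLzF, Finset.mem_filter]
      rintro ⟨_, hm⟩
      exact hm.2.2 hYZ
    have hzLx : z ∉ LxF := by
      rw [hLxF, Finset.mem_filter]
      rintro ⟨_, hm⟩
      exact hm.2.2 hZX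
    have hxLy : x ∉ LyF := by
      rw [hLyF, Finset.mem_filter]
      rintro ⟨_, hm⟩
      exact hm.2.2 hXY
    have hcWF : ∀ v, Op v → v ∉ WF := by
      intro v hv h
      rw [hWF, Finset.mem_filter] at h
      exact h.2.1 hv
    have hcRρ : ∀ v, Op v → v ∉ RρF := by
      intro v hv h
      rw [hRρF, Finset.mem_filter] at h
      exact h.2.1.1 hv
    -- ncard of Nplus for each center
    have nplusCard : ∀ (c c' : V) (LF : Finset V),
        (∀ v, A c v ↔ (v = c' ∨ v ∈ LF ∨ (Up v ∧ A x v))) →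
        c' ∉ LF → c' ∉ WF → Disjoint LF WF →
        (Nplus A c).ncard = 1 + (LF.card + WF.card) := by
      intro c c' LF hiff hc1 hc2 hdis
      rw [show Nplus A c = {u | A c u} from rfl, ncardSet]
      have e : Finset.univ.filter (fun v => A c v) = insert c' (LF ∪ WF) := by
        ext v
        simp only [Finset.mem_filter, Finset.mem_univ, true_and, Finset.mem_insert,
          Finset.mem_union]
        rw [hiff v]
        constructor
        · rintro (h | h | h)
          · exact Or.inl h
          · exact Or.inr (Or.inl h)
          · refine Or.inr (Or.inr ?_)
            rw [hWF, Finset.mem_filter]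
            exact ⟨Finset.mem_univ v, h⟩
        · rintro (h | h | h)
          · exact Or.inl h
          · exact Or.inr (Or.inl h)
          · refine Or.inr (Or.inr ?_)
            rw [hWF, Finset.mem_filter] at h
            exact h.2
      rw [e, Finset.card_insert_of_notMem (by
        rw [Finset.mem_union]
        rintro (h | h)
        · exact hc1 h
        · exact hc2 h), Finset.card_union_of_disjoint hdis]
      omega
    -- ncard of Npp lower bound for each center
    have nppCard : ∀ (c c' : V) (LF : Finset V),
        (∀ v, (v = c' ∨ v ∈ LF ∨ v ∈ RρF) → v ∈ Npp A c) →
        c' ∉ LF → c' ∉ RρF → Disjoint LF RρF →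
        1 + (LF.card + RρF.card) ≤ (Npp A c).ncard := by
      intro c c' LF hsub hc1 hc2 hdis
      have hnc : (Npp A c).ncard = (Finset.univ.filter (fun u => u ∈ Npp A c)).card := by
        have := ncardSet (fun u => u ∈ Npp A c)
        rwa [Set.setOf_mem_eq] at this
      rw [hnc]
      have hsub2 : insert c' (LF ∪ RρF) ⊆ Finset.univ.filter (fun u => u ∈ Npp A c) := by
        intro v hv
        rw [Finset.mem_insert, Finset.mem_union] at hv
        rw [Finset.mem_filter]
        refine ⟨Finset.mem_univ v, ?_⟩
        rcases hv with h | h | h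
        · exact hsub v (Or.inl h)
        · exact hsub v (Or.inr (Or.inl h))
        · exact hsub v (Or.inr (Or.inr h))
      have := Finset.card_le_card hsub2
      rw [Finset.card_insert_of_notMem (by
        rw [Finset.mem_union]
        rintro (h | h)
        · exact hc1 h
        · exact hc2 h), Finset.card_union_of_disjoint hdis] at this
      omega
    -- translate the membership lemmas
    have memLx : ∀ v, v ∈ LxF ↔ MissingEdge A x v := by
      intro v; rw [hLxF, Finset.mem_filter]; simp
    have memLy : ∀ v, v ∈ LyF ↔ MissingEdge A y v := by
      intro v; rw [hLyF, Finset.mem_filter]; simp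
    have memLz : ∀ v, v ∈ LzF ↔ MissingEdge A z v := by
      intro v; rw [hLzF, Finset.mem_filter]; simp
    have memRρ : ∀ v, v ∈ RρF ↔ ((Up v ∧ ¬ A x v) ∧ ∃ u, (Up u ∧ A x u) ∧ A u v) := by
      intro v; rw [hRρF, Finset.mem_filter]; simp
    by_cases h1 : LzF.card ≤ LxF.card
    · refine ⟨x, ?_⟩
      unfold SNP
      have hplus := nplusCard x y LzF
        (fun v => by rw [memLz v]; exact hNx v) (fun h => hyLz h) (hcWF y hOy) hdLzW
      have hpp := nppCard x z LxF
        (fun v hv => hPx v (by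
          rcases hv with h | h | h
          · exact Or.inl h
          · exact Or.inr (Or.inl ((memLx v).1 h))
          · exact Or.inr (Or.inr ((memRρ v).1 h))))
        (fun h => hzLx h) (hcRρ z hOz) hdLxR
      rw [hplus]
      omega
    · by_cases h2 : LxF.card ≤ LyF.card
      · refine ⟨y, ?_⟩
        unfold SNP
        have hplus := nplusCard y z LxF
          (fun v => by rw [memLx v]; exact hNy v) (fun h => hzLx h) (hcWF z hOz) hdLxW
        have hpp := nppCard y x LyF
          (fun v hv => hPy v (by
            rcases hv with h | h | h
            · exact Or.inl h
            · exact Or.inr (Or.inl ((memLy v).1 h))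
            · exact Or.inr (Or.inr ((memRρ v).1 h))))
          (fun h => hxLy h) (hcRρ x hOx) hdLyR
        rw [hplus]
        omega
      · refine ⟨z, ?_⟩
        unfold SNP
        have hplus := nplusCard z x LyF
          (fun v => by rw [memLy v]; exact hNz v) (fun h => hxLy h) (hcWF x hOx) hdLyW
        have hpp := nppCard z y LzF
          (fun v hv => hPz v (by
            rcases hv with h | h | h
            · exact Or.inl h
            · exact Or.inr (Or.inl ((memLz v).1 h))
            · exact Or.inr (Or.inr ((memRρ v).1 h))))
          (fun h => hyLz h) (hcRρ y hOy) hdLzR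
        rw [hplus]
        omega
  · -- Case 2 : the feed is a plain vertex f
    refine ⟨f, ?_⟩
    unfold SNP
    have hppCard : (Npp A f).ncard = (Finset.univ.filter (fun u => u ∈ Npp A f)).card := by
      have := ncardSet (fun u => u ∈ Npp A f)
      rwa [Set.setOf_mem_eq] at this
    have hTNpp : ∀ v ∈ sF.filter (fun v => v ≠ f ∧ ¬ A f v ∧ ∃ t ∈ sF, A f t ∧ A t v),
        v ∈ Npp A f := by
      intro v hv
      rw [Finset.mem_filter] at hv
      obtain ⟨_, hvf, h2, t, _, hft, htv⟩ := hv
      exact ⟨hvf, h2, t, hft, htv⟩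
    by_cases hxf : A x f
    · -- f is dominated by all of O
      have houtU : ∀ v, A f v → Up v := by
        intro v hv
        by_contra hOv
        exact hA f v ⟨hv, hOW f hUf hxf v hOv⟩
      have e1 : sF.filter (fun v => A f v) = Finset.univ.filter (fun v => A f v) := by
        ext v
        simp only [Finset.mem_filter, Finset.mem_univ, true_and, hsF]
        constructor
        · rintro ⟨_, h⟩; exact h
        · intro h; exact ⟨Or.inr (houtU v h), h⟩
      have hxout : x ∉ Finset.univ.filter (fun v => A f v) := by
        rw [Finset.mem_filter]
        rintro ⟨_, h⟩
        exact (houtU x h) hOx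
      have hL : ∑ v ∈ sF.filter (fun v => A f v), w v = (Nplus A f).ncard := by
        rw [e1, sumW_card _ hxout, show Nplus A f = {u | A f u} from rfl, ncardSet]
      refine le_trans (le_of_eq hL.symm) (le_trans hineq ?_)
      rw [hppCard]
      by_cases hxT : x ∈ sF.filter (fun v => v ≠ f ∧ ¬ A f v ∧ ∃ t ∈ sF, A f t ∧ A t v)
      · have hxT' := hxT
        rw [Finset.mem_filter] at hxT'
        obtain ⟨_, hxf', hnAfx, t, htsF, hft, htx⟩ := hxT'
        have hUt : Up t := by
          rcases hsmem t htsF with htx' | h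
          · rw [htx'] at hft; exact absurd hft hnAfx
          · exact h
        have hRt : ¬ A x t := fun h => hA x t ⟨h, htx⟩
        have hONppf : ∀ o, Op o → o ∈ Npp A f := fun o ho =>
          ⟨fun h => hUf (h ▸ ho), fun h => hA f o ⟨h, hOW f hUf hxf o ho⟩,
            t, hft, (hRO t hUt hRt o ho).1⟩
        have hsum : ∑ v ∈ sF.filter (fun v => v ≠ f ∧ ¬ A f v ∧ ∃ t ∈ sF, A f t ∧ A t v), w v
            = Ocard + ((sF.filter (fun v => v ≠ f ∧ ¬ A f v ∧ ∃ t ∈ sF, A f t ∧ A t v)).erase x).card := by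
          rw [← Finset.add_sum_erase _ w hxT, sumW_card _ (Finset.notMem_erase x _)]
          have : w x = Ocard := by rw [hwDef]; simp
          rw [this]
        rw [hsum]
        have hsub : OF ∪ ((sF.filter (fun v => v ≠ f ∧ ¬ A f v ∧ ∃ t ∈ sF, A f t ∧ A t v)).erase x)
            ⊆ Finset.univ.filter (fun u => u ∈ Npp A f) := by
          intro v hv
          rw [Finset.mem_union] at hv
          rw [Finset.mem_filter]
          refine ⟨Finset.mem_univ v, ?_⟩
          rcases hv with h | h
          · rw [hOF, Finset.mem_filter] at h
            exact hONppf v h.2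
          · exact hTNpp v (Finset.mem_of_mem_erase h)
        have hdisj : Disjoint OF
            ((sF.filter (fun v => v ≠ f ∧ ¬ A f v ∧ ∃ t ∈ sF, A f t ∧ A t v)).erase x) := by
          rw [Finset.disjoint_left]
          intro v hv hv2
          rw [hOF, Finset.mem_filter] at hv
          have hv3 := Finset.mem_of_mem_erase hv2
          rw [Finset.mem_filter] at hv3
          rcases hsmem v hv3.1 with h | h
          · exact (Finset.ne_of_mem_erase hv2) h
          · exact h hv.2
        calc Ocard + ((sF.filter (fun v => v ≠ f ∧ ¬ A f v ∧ ∃ t ∈ sF, A f t ∧ A t v)).erase x).card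
            = (OF ∪ ((sF.filter (fun v => v ≠ f ∧ ¬ A f v ∧ ∃ t ∈ sF, A f t ∧ A t v)).erase x)).card := by
              rw [Finset.card_union_of_disjoint hdisj]
          _ ≤ (Finset.univ.filter (fun u => u ∈ Npp A f)).card := Finset.card_le_card hsub
      · rw [sumW_card _ hxT]
        refine Finset.card_le_card ?_
        intro v hv
        rw [Finset.mem_filter]
        exact ⟨Finset.mem_univ v, hTNpp v hv⟩
    · -- f dominates all of O
      have hfO : ∀ o, Op o → A f o ∧ ¬ A o f := hRO f hUf hxf
      have hxUout : x ∉ Finset.univ.filter (fun v => Up v ∧ A f v) := by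
        rw [Finset.mem_filter]
        rintro ⟨_, h, _⟩
        exact h hOx
      have e1 : Finset.univ.filter (fun v => A f v)
          = OF ∪ Finset.univ.filter (fun v => Up v ∧ A f v) := by
        ext v
        simp only [Finset.mem_filter, Finset.mem_univ, true_and, Finset.mem_union, hOF]
        constructor
        · intro h
          by_cases hOv : Op v
          · exact Or.inl hOv
          · exact Or.inr ⟨hOv, h⟩
        · rintro (h | ⟨_, h⟩)
          · exact (hfO v h).1
          · exact h
      have hdisj1 : Disjoint OF (Finset.univ.filter (fun v => Up v ∧ A f v)) := by
        rw [Finset.disjoint_left]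
        intro v hv hv2
        rw [hOF, Finset.mem_filter] at hv
        rw [Finset.mem_filter] at hv2
        exact hv2.2.1 hv.2
      have hplus : (Nplus A f).ncard
          = Ocard + (Finset.univ.filter (fun v => Up v ∧ A f v)).card := by
        rw [show Nplus A f = {u | A f u} from rfl, ncardSet, e1,
          Finset.card_union_of_disjoint hdisj1]
      have e2 : sF.filter (fun v => A f v) = insert x (Finset.univ.filter (fun v => Up v ∧ A f v)) := by
        ext v
        simp only [Finset.mem_filter, Finset.mem_univ, true_and, Finset.mem_insert, hsF]
        constructor
        · rintro ⟨h1 | h1, h2⟩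
          · exact Or.inl h1
          · exact Or.inr ⟨h1, h2⟩
        · rintro (rfl | ⟨h1, h2⟩)
          · exact ⟨Or.inl rfl, (hfO v hOx).1⟩
          · exact ⟨Or.inr h1, h2⟩
      have hsumL : ∑ v ∈ sF.filter (fun v => A f v), w v
          = Ocard + (Finset.univ.filter (fun v => Up v ∧ A f v)).card := by
        rw [e2, Finset.sum_insert hxUout, sumW_card _ hxUout]
        have : w x = Ocard := by rw [hwDef]; simp
        rw [this]
      have hxT : x ∉ sF.filter (fun v => v ≠ f ∧ ¬ A f v ∧ ∃ t ∈ sF, A f t ∧ A t v) := by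
        rw [Finset.mem_filter]
        rintro ⟨_, _, h, _⟩
        exact h (hfO x hOx).1
      rw [hplus, ← hsumL]
      refine le_trans hineq ?_
      rw [sumW_card _ hxT, hppCard]
      refine Finset.card_le_card ?_
      intro v hv
      rw [Finset.mem_filter]
      exact ⟨Finset.mem_univ v, hTNpp v hv⟩
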